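/- Let T > 0 and let W, V : ℝ → ℝ be functions that are differentiable at every t ∈ [0, T] and satisfy, for every t ∈ [0, T], the system W′(t) = (λ̂ + z(t) − L)·W(t) − L·V(t), V′(t) = (λ̌ + z(t) + L)·V(t) + L·W(t), together with the boundary conditions W(T) = 1 and V(0) = e₊^{−1}·W(0). Then W(0) = exp(−λ₊ T − ∫₀ᵀ z(τ) dτ) and V(T) = e₊^{−1}. -/

import Mathlib

/-- Solving the boundary value problem for the linear comparison system with
`W(T) = 1` and `V(0) = e₊⁻¹ W(0)` yields `W(0) = e^{−λ₊ T − ∫₀ᵀ z}` and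
`V(T) = e₊⁻¹`. -/
theorem boundary_value_problem_solution
    (lhat lcheck L : ℝ) (hl : lhat > lcheck) (hL : 0 < L)
    (hgap : lhat - lcheck > 4 * L)
    (D lp ep : ℝ)
    (hD : D = (lhat - lcheck) * (lhat - lcheck - 4 * L))
    (hlp : lp = (lhat + lcheck + Real.sqrt D) / 2)
    (hep : ep = L / (lhat - L - lp))
    (z : ℝ → ℝ) (hz : Continuous z)
    (T : ℝ) (hT : 0 < T)
    (W V : ℝ → ℝ)
    (hWV : ∀ t ∈ Set.Icc (0:ℝ) T,
      HasDerivAt W ((lhat + z t - L) * W t - L * V t) t ∧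
      HasDerivAt V ((lcheck + z t + L) * V t + L * W t) t)
    (hWT : W T = 1)
    (hV0 : V 0 = ep⁻¹ * W 0) :
    W 0 = Real.exp (-(lp * T) - ∫ τ in (0:ℝ)..T, z τ) ∧ V T = ep⁻¹ := by
  have hD0 : 0 ≤ D := by nlinarith
  have hsq : Real.sqrt D * Real.sqrt D = D := Real.mul_self_sqrt hD0
  have hsnn : 0 ≤ Real.sqrt D := Real.sqrt_nonneg D
  -- `lhat - L - lp > 0`
  have hpos : 0 < lhat - L - lp := by
    have h1 : Real.sqrt D < lhat - lcheck - 2 * L := by nlinarith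
    rw [hlp]; linarith
  have hLne : L ≠ 0 := ne_of_gt hL
  have he : ep⁻¹ * L = lhat - L - lp := by
    rw [hep]; field_simp
  -- key characteristic identity
  have key : (lhat - L - lp) * (lcheck + L - lp) + L * L = 0 := by
    rw [hlp, hD] at *
    nlinarith [hsq]
  -- antiderivative of z
  set F : ℝ → ℝ := fun u => ∫ τ in (0:ℝ)..u, z τ with hFdef
  have hF : ∀ t : ℝ, HasDerivAt F (z t) t := fun t =>
    intervalIntegral.integral_hasDerivAt_right (hz.intervalIntegrable _ _)
      (hz.stronglyMeasurableAtFilter _ _) hz.continuousAt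
  have hF0 : F 0 = 0 := intervalIntegral.integral_same
  -- Step 1: V = ep⁻¹ W on [0, T]
  set μ : ℝ := lcheck + L + L * ep⁻¹ with hμ
  set G : ℝ → ℝ := fun t => (V t - ep⁻¹ * W t) * Real.exp (-(μ * t + F t)) with hGdef
  have hGderiv : ∀ t ∈ Set.Icc (0:ℝ) T, HasDerivAt G 0 t := by
    intro t ht
    have hexp : HasDerivAt (fun u => Real.exp (-(μ * u + F u)))
        (Real.exp (-(μ * t + F t)) * (-(μ * 1 + z t))) t :=
      ((((hasDerivAt_id t).const_mul μ).add (hF t)).neg).exp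
    have hd := ((hWV t ht).2.sub ((hWV t ht).1.const_mul ep⁻¹)).mul hexp
    convert hd using 1
    · rfl
    · rfl
    · rfl
    simp only [hμ, Pi.sub_apply]
    linear_combination
      (-(Real.exp (-((lcheck + L + L * ep⁻¹) * t + F t)) * W t) *
        (lcheck + 2 * L - lhat + ep⁻¹ * L + (lhat - L - lp)) / L) * he +
      (-(Real.exp (-((lcheck + L + L * ep⁻¹) * t + F t)) * W t) / L) * key +
      ((Real.exp (-((lcheck + L + L * ep⁻¹) * t + F t)) * W t) *
        (L + lcheck * ep⁻¹ - lhat * ep⁻¹ + 2 * L * ep⁻¹ + L * ep⁻¹ ^ 2)) *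
        (mul_inv_cancel₀ hLne)
  have hGcont : ContinuousOn G (Set.Icc 0 T) := fun x hx =>
    (hGderiv x hx).continuousAt.continuousWithinAt
  have hGconst : ∀ x ∈ Set.Icc (0:ℝ) T, G x = G 0 :=
    constant_of_has_deriv_right_zero hGcont
      (fun x hx => ((hGderiv x (Set.mem_Icc_of_Ico hx)).hasDerivWithinAt))
  have hG0 : G 0 = 0 := by simp [hGdef, hV0]
  have hVW : ∀ t ∈ Set.Icc (0:ℝ) T, V t = ep⁻¹ * W t := by
    intro t ht
    have := (hGconst t ht).trans hG0
    have hE := Real.exp_ne_zero (-(μ * t + F t))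
    have := mul_eq_zero.mp this
    rcases this with h | h
    · linarith [sub_eq_zero.mp h]
    · exact absurd h hE
  -- Step 2: H t = W t * exp(-(lp t + F t)) is constant
  set H : ℝ → ℝ := fun t => W t * Real.exp (-(lp * t + F t)) with hHdef
  have hHderiv : ∀ t ∈ Set.Icc (0:ℝ) T, HasDerivAt H 0 t := by
    intro t ht
    have hexp : HasDerivAt (fun u => Real.exp (-(lp * u + F u)))
        (Real.exp (-(lp * t + F t)) * (-(lp * 1 + z t))) t :=
      ((((hasDerivAt_id t).const_mul lp).add (hF t)).neg).exp
    have hd := (hWV t ht).1.mul hexp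
    convert hd using 1
    · rfl
    · rfl
    · rfl
    rw [hVW t ht]
    linear_combination (Real.exp (-(lp * t + F t)) * W t) * he
  have hHcont : ContinuousOn H (Set.Icc 0 T) := fun x hx =>
    (hHderiv x hx).continuousAt.continuousWithinAt
  have hHconst : ∀ x ∈ Set.Icc (0:ℝ) T, H x = H 0 :=
    constant_of_has_deriv_right_zero hHcont
      (fun x hx => ((hHderiv x (Set.mem_Icc_of_Ico hx)).hasDerivWithinAt))
  have hTmem : T ∈ Set.Icc (0:ℝ) T := Set.right_mem_Icc.mpr (le_of_lt hT)
  have hHT := hHconst T hTmem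
  have hH0 : H 0 = W 0 := by simp [hHdef, hF0]
  constructor
  · rw [← hH0, ← hHT]
    simp only [hHdef, hWT, one_mul]
    congr 1
    ring
  · rw [hVW T hTmem, hWT, mul_one]
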